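/- Let λ ∈ (0, 1) and s ∈ [0, 1). If p ≥ 2, then p(p − 1) · ∫₀¹ (λ t · 1_{[0, 1−λ]}(t) + (1 − λ)(1 − t) · 1_{[1−λ, 1]}(t)) · ((1 − t) + t s)^{p−2} dt ≥ λ(1 − λ^{p−1}). If 1 < p < 2, then the same integral expression is bounded below by p(p − 1)·λ(1 − λ)/2. -/

import Mathlib

open MeasureTheory Set intervalIntegral Real

noncomputable def Kj (l t : ℝ) : ℝ :=
  l * t * Set.indicator (Set.Icc (0 : ℝ) (1 - l)) (fun _ => (1 : ℝ)) t +
    (1 - l) * (1 - t) * Set.indicator (Set.Icc (1 - l) (1 : ℝ)) (fun _ => (1 : ℝ)) t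

lemma Kj_meas (l : ℝ) : Measurable (Kj l) := by
  unfold Kj
  exact ((measurable_const.mul measurable_id).mul
      (measurable_const.indicator measurableSet_Icc)).add
    ((measurable_const.mul (measurable_const.sub measurable_id)).mul
      (measurable_const.indicator measurableSet_Icc))

lemma Kj_nonneg {l : ℝ} (hl0 : 0 < l) (hl1 : l < 1) {t : ℝ} (ht0 : 0 ≤ t) (ht1 : t ≤ 1) :
    0 ≤ Kj l t := by
  unfold Kj
  have h1 : (0:ℝ) ≤ Set.indicator (Set.Icc (0 : ℝ) (1 - l)) (fun _ => (1 : ℝ)) t :=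
    Set.indicator_nonneg (fun _ _ => zero_le_one) t
  have h2 : (0:ℝ) ≤ Set.indicator (Set.Icc (1 - l) (1 : ℝ)) (fun _ => (1 : ℝ)) t :=
    Set.indicator_nonneg (fun _ _ => zero_le_one) t
  have := mul_nonneg (mul_nonneg hl0.le ht0) h1
  have := mul_nonneg (mul_nonneg (by linarith : (0:ℝ) ≤ 1 - l) (by linarith : (0:ℝ) ≤ 1 - t)) h2
  linarith

lemma Kj_le_one {l : ℝ} (hl0 : 0 < l) (hl1 : l < 1) {t : ℝ} (ht0 : 0 ≤ t) (ht1 : t ≤ 1) :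
    Kj l t ≤ 1 := by
  unfold Kj
  have h1 : Set.indicator (Set.Icc (0 : ℝ) (1 - l)) (fun _ => (1 : ℝ)) t ≤ 1 :=
    Set.indicator_le_self' (fun _ _ => zero_le_one) t |>.trans le_rfl
  have h2 : Set.indicator (Set.Icc (1 - l) (1 : ℝ)) (fun _ => (1 : ℝ)) t ≤ 1 :=
    Set.indicator_le_self' (fun _ _ => zero_le_one) t |>.trans le_rfl
  have h1' : (0:ℝ) ≤ Set.indicator (Set.Icc (0 : ℝ) (1 - l)) (fun _ => (1 : ℝ)) t :=
    Set.indicator_nonneg (fun _ _ => zero_le_one) t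
  have h2' : (0:ℝ) ≤ Set.indicator (Set.Icc (1 - l) (1 : ℝ)) (fun _ => (1 : ℝ)) t :=
    Set.indicator_nonneg (fun _ _ => zero_le_one) t
  have hA : l * t * Set.indicator (Set.Icc (0 : ℝ) (1 - l)) (fun _ => (1 : ℝ)) t ≤ l * t :=
    mul_le_of_le_one_right (mul_nonneg hl0.le ht0) h1
  have hB : (1 - l) * (1 - t) * Set.indicator (Set.Icc (1 - l) (1 : ℝ)) (fun _ => (1 : ℝ)) t
      ≤ (1 - l) * (1 - t) :=
    mul_le_of_le_one_right (mul_nonneg (by linarith) (by linarith)) h2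
  nlinarith [mul_nonneg hl0.le (sub_nonneg.mpr ht1), mul_nonneg ht0 (sub_nonneg.mpr hl1.le)]

lemma bdd_II {f : ℝ → ℝ} {C : ℝ} (hm : Measurable f) (hb : ∀ t ∈ Set.Ioc (0:ℝ) 1, |f t| ≤ C) :
    IntervalIntegrable f volume 0 1 := by
  rw [intervalIntegrable_iff, uIoc_of_le zero_le_one]
  refine MeasureTheory.Integrable.mono' (g := fun _ : ℝ => C)
    ((integrableOn_const_iff (C := C)).mpr (Or.inr measure_Ioc_lt_top))
    hm.aestronglyMeasurable.restrict ?_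
  refine (ae_restrict_iff' measurableSet_Ioc).mpr (Filter.Eventually.of_forall fun t ht => ?_)
  simpa using hb t ht

lemma ae_ne (c : ℝ) : ∀ᵐ t : ℝ, t ≠ c := by
  have : {t : ℝ | ¬ t ≠ c} = {c} := by ext x; simp
  rw [MeasureTheory.ae_iff, this]
  exact measure_singleton c

lemma Kj_split {l : ℝ} (hl0 : 0 < l) (hl1 : l < 1) {f : ℝ → ℝ}
    (hi : IntervalIntegrable (fun t => Kj l t * f t) volume 0 1) :
    ∫ t in (0:ℝ)..1, Kj l t * f t
      = (∫ t in (0:ℝ)..(1-l), l * t * f t) + ∫ t in (1-l)..(1:ℝ), (1-l) * (1-t) * f t := by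
  have hc0 : (0:ℝ) ≤ 1 - l := by linarith
  have hc1 : (1:ℝ) - l ≤ 1 := by linarith
  rw [← integral_add_adjacent_intervals
      (hi.mono_set (by rw [uIcc_of_le hc0, uIcc_of_le zero_le_one]; exact Icc_subset_Icc le_rfl hc1))
      (hi.mono_set (by rw [uIcc_of_le hc1, uIcc_of_le zero_le_one]; exact Icc_subset_Icc hc0 le_rfl))]
  congr 1
  · refine integral_congr_ae ?_
    filter_upwards [ae_ne (1 - l)] with t htne ht
    rw [uIoc_of_le hc0] at ht
    have hmem : t ∈ Set.Icc (0:ℝ) (1 - l) := ⟨ht.1.le, ht.2⟩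
    have h1 : Set.indicator (Set.Icc (0 : ℝ) (1 - l)) (fun _ => (1 : ℝ)) t = 1 :=
      Set.indicator_of_mem hmem _
    have h2 : Set.indicator (Set.Icc (1 - l) (1 : ℝ)) (fun _ => (1 : ℝ)) t = 0 :=
      Set.indicator_of_notMem (fun hmem => htne (le_antisymm ht.2 hmem.1)) _
    unfold Kj; rw [h1, h2]; ring
  · refine integral_congr_ae ?_
    filter_upwards with t ht
    rw [uIoc_of_le hc1] at ht
    have h1 : Set.indicator (Set.Icc (0 : ℝ) (1 - l)) (fun _ => (1 : ℝ)) t = 0 :=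
      Set.indicator_of_notMem (fun hmem => absurd hmem.2 (not_le.mpr ht.1)) _
    have hmem : t ∈ Set.Icc (1 - l) (1:ℝ) := ⟨ht.1.le, ht.2⟩
    have h2 : Set.indicator (Set.Icc (1 - l) (1 : ℝ)) (fun _ => (1 : ℝ)) t = 1 :=
      Set.indicator_of_mem hmem _
    unfold Kj; rw [h1, h2]; ring

lemma int_one_sub_rpow (a b q : ℝ) (hq : -1 < q) :
    ∫ t in a..b, (1-t)^q = ((1-a)^(q+1) - (1-b)^(q+1))/(q+1) := by
  have := intervalIntegral.integral_comp_sub_left (a := a) (b := b) (fun x => x ^ q) 1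
  rw [this, integral_rpow (Or.inl hq)]

lemma g_meas (l s p : ℝ) : Measurable (fun t => Kj l t * ((1-t)+t*s)^(p-2)) :=
  (Kj_meas l).mul
    (Measurable.pow ((measurable_const.sub measurable_id).add
      (measurable_id.mul measurable_const)) measurable_const)

lemma Kj_one {l : ℝ} (hl0 : 0 < l) : Kj l 1 = 0 := by
  unfold Kj
  rw [Set.indicator_of_notMem (fun h : (1:ℝ) ∈ Set.Icc (0:ℝ) (1-l) => by
    have := h.2; linarith)]
  ring

lemma g_bdd {l s p : ℝ} (hl0 : 0 < l) (hl1 : l < 1) (hs0 : 0 ≤ s) (hs1 : s < 1) (hp : 1 < p) :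
    ∀ t ∈ Set.Ioc (0:ℝ) 1, |Kj l t * ((1-t)+t*s)^(p-2)| ≤ l^(p-2) + 1 := by
  intro t ht
  obtain ⟨ht0, ht1⟩ := ht
  have hb0 : (0:ℝ) ≤ (1-t)+t*s := by nlinarith
  have hb1 : (1-t)+t*s ≤ 1 := by nlinarith
  have hK0 : 0 ≤ Kj l t := Kj_nonneg hl0 hl1 ht0.le ht1
  have hK1 : Kj l t ≤ 1 := Kj_le_one hl0 hl1 ht0.le ht1
  have hpow0 : (0:ℝ) ≤ ((1-t)+t*s)^(p-2) := Real.rpow_nonneg hb0 _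
  rw [abs_of_nonneg (mul_nonneg hK0 hpow0)]
  have hC0 : (0:ℝ) ≤ l^(p-2) := Real.rpow_nonneg hl0.le _
  rcases le_or_gt 2 p with h2 | h2
  · have hpw : ((1-t)+t*s)^(p-2) ≤ 1 := Real.rpow_le_one hb0 hb1 (by linarith)
    nlinarith
  · rcases le_or_gt t (1-l) with hts | hts
    · have hlb : l ≤ (1-t)+t*s := by nlinarith
      have hpw : ((1-t)+t*s)^(p-2) ≤ l^(p-2) :=
        Real.rpow_le_rpow_of_nonpos hl0 hlb (by linarith)
      nlinarith
    · have h1 : Set.indicator (Set.Icc (0 : ℝ) (1 - l)) (fun _ => (1 : ℝ)) t = 0 :=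
        Set.indicator_of_notMem (fun hmem => absurd hmem.2 (not_le.mpr hts)) _
      have h2' : Set.indicator (Set.Icc (1 - l) (1 : ℝ)) (fun _ => (1 : ℝ)) t ≤ 1 :=
        Set.indicator_le_self' (fun _ _ => zero_le_one) t |>.trans le_rfl
      have h2'' : (0:ℝ) ≤ Set.indicator (Set.Icc (1 - l) (1 : ℝ)) (fun _ => (1 : ℝ)) t :=
        Set.indicator_nonneg (fun _ _ => zero_le_one) t
      have hK : Kj l t ≤ 1 - t := by
        unfold Kj at *
        rw [h1]
        have e0 : (0:ℝ) ≤ (1-l)*(1-t) := by nlinarith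
        have e1 : (1-l)*(1-t)*Set.indicator (Set.Icc (1 - l) (1 : ℝ)) (fun _ => (1 : ℝ)) t
            ≤ (1-l)*(1-t) := mul_le_of_le_one_right e0 h2'
        nlinarith
      rcases eq_or_lt_of_le ht1 with rfl | hlt
      · have : Kj l 1 = 0 := Kj_one hl0
        rw [this, zero_mul]; linarith
      · have h1t : (0:ℝ) < 1 - t := by linarith
        have hpw : ((1-t)+t*s)^(p-2) ≤ (1-t)^(p-2) :=
          Real.rpow_le_rpow_of_nonpos h1t (by nlinarith) (by linarith)
        have step : Kj l t * ((1-t)+t*s)^(p-2) ≤ (1-t) * (1-t)^(p-2) :=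
          mul_le_mul hK hpw hpow0 h1t.le
        have heq : (1-t) * (1-t)^(p-2) = (1-t)^(p-1) := by
          rw [show p - 1 = p - 2 + 1 by ring, Real.rpow_add_one (ne_of_gt h1t)]
          ring
        have hle1 : (1-t)^(p-1) ≤ 1 := Real.rpow_le_one h1t.le (by linarith) (by linarith)
        rw [heq] at step
        linarith

lemma g_II {l s p : ℝ} (hl0 : 0 < l) (hl1 : l < 1) (hs0 : 0 ≤ s) (hs1 : s < 1) (hp : 1 < p) :
    IntervalIntegrable (fun t => Kj l t * ((1-t)+t*s)^(p-2)) volume 0 1 :=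
  bdd_II (g_meas l s p) (g_bdd hl0 hl1 hs0 hs1 hp)

lemma Kj_II {l : ℝ} (hl0 : 0 < l) (hl1 : l < 1) : IntervalIntegrable (Kj l) volume 0 1 :=
  bdd_II (Kj_meas l) (fun t ht => by
    rw [abs_of_nonneg (Kj_nonneg hl0 hl1 ht.1.le ht.2)]
    exact Kj_le_one hl0 hl1 ht.1.le ht.2)

lemma Kj_integral {l : ℝ} (hl0 : 0 < l) (hl1 : l < 1) :
    ∫ t in (0:ℝ)..1, Kj l t = l * (1 - l) / 2 := by
  have hi : IntervalIntegrable (fun t => Kj l t * (1:ℝ)) volume 0 1 := by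
    simpa using Kj_II hl0 hl1
  have hs := Kj_split hl0 hl1 (f := fun _ => (1:ℝ)) hi
  simp only [mul_one] at hs
  rw [show (fun t => Kj l t) = fun t => Kj l t from rfl] at hs
  rw [hs]
  have h2 : ∫ t in (1-l)..(1:ℝ), (1-l) * (1-t) = (1-l) * (l^2/2) := by
    rw [intervalIntegral.integral_const_mul]
    have := intervalIntegral.integral_comp_sub_left (a := 1-l) (b := 1) (fun x => x) 1
    rw [this, integral_id]
    norm_num
  have h1 : ∫ t in (0:ℝ)..(1-l), l * t = l * ((1-l)^2/2) := by
    rw [intervalIntegral.integral_const_mul, integral_id]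
    norm_num
  rw [h1, h2]; ring

lemma Kj_integral_pow {l p : ℝ} (hl0 : 0 < l) (hl1 : l < 1) (hp : 2 ≤ p) :
    p * (p - 1) * ∫ t in (0:ℝ)..1, Kj l t * (1-t)^(p-2) = l * (1 - l^(p-1)) := by
  have hp1 : (1:ℝ) < p := by linarith
  have hp0 : p ≠ 0 := by linarith
  have hp1' : p - 1 ≠ 0 := by intro h; linarith
  have hint : IntervalIntegrable (fun t => Kj l t * (1-t)^(p-2)) volume 0 1 := by
    have := g_II (s := 0) hl0 hl1 le_rfl one_pos hp1
    simpa using this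
  rw [Kj_split hl0 hl1 hint]
  have i1 : IntervalIntegrable (fun t => (1-t)^(p-2)) volume 0 (1-l) :=
    ((Real.continuous_rpow_const (by linarith)).comp
      (continuous_const.sub continuous_id)).intervalIntegrable _ _
  have i2 : IntervalIntegrable (fun t => (1-t)^(p-1)) volume 0 (1-l) :=
    ((Real.continuous_rpow_const (by linarith)).comp
      (continuous_const.sub continuous_id)).intervalIntegrable _ _
  have hA : ∫ t in (0:ℝ)..(1-l), l * t * (1-t)^(p-2)
      = l * ((1 - l^(p-1))/(p-1) - (1 - l^p)/p) := by
    have hEq : Set.EqOn (fun t => l * t * (1-t)^(p-2))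
        (fun t => l * ((1-t)^(p-2) - (1-t)^(p-1))) (Set.uIcc 0 (1-l)) := by
      intro t ht
      rw [Set.uIcc_of_le (by linarith : (0:ℝ) ≤ 1-l)] at ht
      have h1t : (0:ℝ) < 1 - t := by linarith [ht.2]
      have hr : (1-t)^(p-1) = (1-t)^(p-2) * (1-t) := by
        rw [show p-1 = p-2+1 by ring, Real.rpow_add_one (ne_of_gt h1t)]
      simp only
      rw [hr]; ring
    rw [intervalIntegral.integral_congr hEq, intervalIntegral.integral_const_mul,
      intervalIntegral.integral_sub i1 i2,
      int_one_sub_rpow _ _ _ (by linarith : (-1:ℝ) < p-2),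
      int_one_sub_rpow _ _ _ (by linarith : (-1:ℝ) < p-1)]
    norm_num
    left
    rw [show p-2+1 = p-1 by ring]
  have hB : ∫ t in (1-l)..(1:ℝ), (1-l) * (1-t) * (1-t)^(p-2) = (1-l) * (l^p/p) := by
    have hEq : Set.EqOn (fun t => (1-l) * (1-t) * (1-t)^(p-2))
        (fun t => (1-l) * (1-t)^(p-1)) (Set.uIcc (1-l) 1) := by
      intro t ht
      rw [Set.uIcc_of_le (by linarith : 1-l ≤ (1:ℝ))] at ht
      simp only
      rcases eq_or_lt_of_le ht.2 with rfl | hlt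
      · simp [Real.zero_rpow (show p-1 ≠ 0 from hp1')]
      · have h1t : (0:ℝ) < 1 - t := by linarith
        rw [show p-1 = p-2+1 by ring, Real.rpow_add_one (ne_of_gt h1t)]
        ring
    rw [intervalIntegral.integral_congr hEq, intervalIntegral.integral_const_mul,
      int_one_sub_rpow _ _ _ (by linarith : (-1:ℝ) < p-1)]
    norm_num
    left
    rw [Real.zero_rpow hp0]
    ring
  rw [hA, hB]
  have hlp : l^p = l * l^(p-1) := by
    have h := Real.rpow_add hl0 1 (p-1)
    rw [show (1:ℝ)+(p-1) = p by ring, Real.rpow_one] at h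
    exact h
  rw [hlp]
  field_simp
  ring

theorem jensen_error_integral_bounds
    (l : ℝ) (hl : l ∈ Set.Ioo (0 : ℝ) 1) (s : ℝ) (hs : s ∈ Set.Ico (0 : ℝ) 1) (p : ℝ) :
    (2 ≤ p →
      l * (1 - l ^ (p - 1)) ≤
        p * (p - 1) *
          ∫ t in (0 : ℝ)..1,
            (l * t * Set.indicator (Set.Icc (0 : ℝ) (1 - l)) (fun _ => (1 : ℝ)) t +
              (1 - l) * (1 - t) * Set.indicator (Set.Icc (1 - l) (1 : ℝ)) (fun _ => (1 : ℝ)) t) *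
              ((1 - t) + t * s) ^ (p - 2)) ∧
    (1 < p → p < 2 →
      p * (p - 1) * l * (1 - l) / 2 ≤
        p * (p - 1) *
          ∫ t in (0 : ℝ)..1,
            (l * t * Set.indicator (Set.Icc (0 : ℝ) (1 - l)) (fun _ => (1 : ℝ)) t +
              (1 - l) * (1 - t) * Set.indicator (Set.Icc (1 - l) (1 : ℝ)) (fun _ => (1 : ℝ)) t) *
              ((1 - t) + t * s) ^ (p - 2)) := by
  obtain ⟨hl0, hl1⟩ := hl
  obtain ⟨hs0, hs1⟩ := hs
  constructor
  · intro hp2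
    have hp1 : (1:ℝ) < p := by linarith
    have hg := g_II hl0 hl1 hs0 hs1 hp1
    have hh : IntervalIntegrable (fun t => Kj l t * (1-t)^(p-2)) volume 0 1 := by
      simpa using g_II (s := 0) hl0 hl1 le_rfl one_pos hp1
    have hmono : (∫ t in (0:ℝ)..1, Kj l t * (1-t)^(p-2))
        ≤ ∫ t in (0:ℝ)..1, Kj l t * ((1-t)+t*s)^(p-2) := by
      apply intervalIntegral.integral_mono_on zero_le_one hh hg
      intro t ht
      refine mul_le_mul_of_nonneg_left ?_ (Kj_nonneg hl0 hl1 ht.1 ht.2)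
      exact Real.rpow_le_rpow (by linarith [ht.2])
        (by nlinarith [mul_nonneg ht.1 hs0]) (by linarith)
    show l * (1 - l ^ (p - 1)) ≤
      p * (p - 1) * ∫ t in (0:ℝ)..1, Kj l t * ((1-t)+t*s)^(p-2)
    calc l * (1 - l ^ (p - 1))
        = p * (p - 1) * ∫ t in (0:ℝ)..1, Kj l t * (1-t)^(p-2) :=
          (Kj_integral_pow hl0 hl1 hp2).symm
      _ ≤ p * (p - 1) * ∫ t in (0:ℝ)..1, Kj l t * ((1-t)+t*s)^(p-2) :=
          mul_le_mul_of_nonneg_left hmono (by nlinarith)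
  · intro hp1 hp2
    have hg := g_II hl0 hl1 hs0 hs1 hp1
    have hK := Kj_II hl0 hl1
    have hmono : (∫ t in (0:ℝ)..1, Kj l t)
        ≤ ∫ t in (0:ℝ)..1, Kj l t * ((1-t)+t*s)^(p-2) := by
      apply intervalIntegral.integral_mono_on zero_le_one hK hg
      intro t ht
      rcases eq_or_lt_of_le ht.2 with rfl | hlt
      · rw [Kj_one hl0]; simp
      · refine le_mul_of_one_le_right (Kj_nonneg hl0 hl1 ht.1 ht.2) ?_
        refine Real.one_le_rpow_of_pos_of_le_one_of_nonpos ?_ ?_ (by linarith)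
        · nlinarith [mul_nonneg ht.1 hs0]
        · nlinarith [mul_nonneg ht.1 (by linarith : (0:ℝ) ≤ 1 - s)]
    show p * (p - 1) * l * (1 - l) / 2 ≤
      p * (p - 1) * ∫ t in (0:ℝ)..1, Kj l t * ((1-t)+t*s)^(p-2)
    calc p * (p - 1) * l * (1 - l) / 2
        = p * (p - 1) * ∫ t in (0:ℝ)..1, Kj l t := by rw [Kj_integral hl0 hl1]; ring
      _ ≤ p * (p - 1) * ∫ t in (0:ℝ)..1, Kj l t * ((1-t)+t*s)^(p-2) :=
          mul_le_mul_of_nonneg_left hmono (by nlinarith)
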